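/- In Max ℂ² (where ℂ² is the C*-algebra ℂ × ℂ with coordinatewise operations), the diagonal subspace D = {(x, x) : x ∈ ℂ} is a maximal proper linear subspace but is not a prime element: for a = ℂ·(1,0) and b = ℂ·(0,1) one has a∘⊤∘b = {0} ≤ D while a ≰ D and b ≰ D. Consequently D is not a meet of prime elements (D ≠ ⨅{p prime : D ≤ p}), and hence Max ℂ² is not spatial with respect to irreducible representations. -/

import Mathlib

/-- The quantale multiplication of `Max ℂ²`: `M∘N` is the closure of the linear span of the
products (all subspaces of `ℂ²` are closed). -/
noncomputable def qmul (M N : Submodule ℂ (ℂ × ℂ)) : Submodule ℂ (ℂ × ℂ) :=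
  (M * N).topologicalClosure

/-- A prime element of the quantale `Max ℂ²`: `M∘⊤∘N ≤ P` implies `M ≤ P` or `N ≤ P`. -/
def IsPrimeEl (P : Submodule ℂ (ℂ × ℂ)) : Prop :=
  ∀ M N : Submodule ℂ (ℂ × ℂ), IsClosed (M : Set (ℂ × ℂ)) → IsClosed (N : Set (ℂ × ℂ)) →
    qmul (qmul M ⊤) N ≤ P → M ≤ P ∨ N ≤ P

/-- The diagonal subspace `{(x, x) : x ∈ ℂ}` of `ℂ²`. -/
noncomputable def diagSub : Submodule ℂ (ℂ × ℂ) where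
  carrier := {z | z.1 = z.2}
  add_mem' := by
    intro a b ha hb
    simp only [Set.mem_setOf_eq, Prod.fst_add, Prod.snd_add] at *
    rw [ha, hb]
  zero_mem' := rfl
  smul_mem' := by
    intro c z hz
    simp only [Set.mem_setOf_eq, Prod.smul_fst, Prod.smul_snd] at *
    rw [hz]

lemma allClosed (s : Submodule ℂ (ℂ × ℂ)) : IsClosed (s : Set (ℂ × ℂ)) :=
  s.closed_of_finiteDimensional

lemma qmul_eq (M N : Submodule ℂ (ℂ × ℂ)) : qmul M N = M * N :=
  (allClosed _).submodule_topologicalClosure_eq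

lemma mem_diag (z : ℂ × ℂ) : z ∈ diagSub ↔ z.1 = z.2 := Iff.rfl

lemma one_zero_not_mem : ((1 : ℂ), (0 : ℂ)) ∉ diagSub := by
  simp [mem_diag]

lemma zero_one_not_mem : ((0 : ℂ), (1 : ℂ)) ∉ diagSub := by
  simp [mem_diag]

lemma diag_ne_top : diagSub ≠ ⊤ := fun h => one_zero_not_mem (h ▸ Submodule.mem_top)

lemma diag_max : ∀ M : Submodule ℂ (ℂ × ℂ), diagSub < M → M = ⊤ := by
  intro M hM
  obtain ⟨z, hzM, hzD⟩ := SetLike.exists_of_lt hM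
  have hc : z.1 - z.2 ≠ 0 := sub_ne_zero.mpr hzD
  have hdz : ((z.2, z.2) : ℂ × ℂ) ∈ M := hM.le rfl
  have h10 : ((1 : ℂ), (0 : ℂ)) ∈ M := by
    have : (z.1 - z.2)⁻¹ • (z - (z.2, z.2)) ∈ M :=
      M.smul_mem _ (M.sub_mem hzM hdz)
    convert this using 1
    ext <;> simp [Prod.smul_fst, Prod.smul_snd]
    · field_simp
  rw [eq_top_iff]
  intro w _
  have : w = (w.1 - w.2) • ((1 : ℂ), (0 : ℂ)) + (w.2, w.2) := by
    ext <;> simp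
  rw [this]
  exact M.add_mem (M.smul_mem _ h10) (hM.le rfl)

lemma prod_bot :
    qmul (qmul (Submodule.span ℂ {((1 : ℂ), (0 : ℂ))}) ⊤)
      (Submodule.span ℂ {((0 : ℂ), (1 : ℂ))}) = ⊥ := by
  rw [qmul_eq, qmul_eq]
  have h1 : Submodule.span ℂ {((1 : ℂ), (0 : ℂ))} * ⊤ ≤
      Submodule.span ℂ {((1 : ℂ), (0 : ℂ))} := by
    rw [Submodule.mul_le]
    intro m hm t _
    obtain ⟨c, rfl⟩ := Submodule.mem_span_singleton.mp hm
    refine Submodule.mem_span_singleton.mpr ⟨c * t.1, ?_⟩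
    ext <;> simp [mul_comm]
  rw [eq_bot_iff]
  refine le_trans (mul_le_mul' h1 le_rfl) ?_
  rw [Submodule.mul_le]
  intro m hm n hn
  obtain ⟨c, rfl⟩ := Submodule.mem_span_singleton.mp hm
  obtain ⟨d, rfl⟩ := Submodule.mem_span_singleton.mp hn
  have : (c • ((1 : ℂ), (0 : ℂ))) * (d • ((0 : ℂ), (1 : ℂ))) = 0 := by
    ext <;> simp
  rw [this]; exact (⊥ : Submodule ℂ (ℂ × ℂ)).zero_mem

lemma a_not_le : ¬ Submodule.span ℂ {((1 : ℂ), (0 : ℂ))} ≤ diagSub :=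
  fun h => one_zero_not_mem (h (Submodule.mem_span_singleton_self _))

lemma b_not_le : ¬ Submodule.span ℂ {((0 : ℂ), (1 : ℂ))} ≤ diagSub :=
  fun h => zero_one_not_mem (h (Submodule.mem_span_singleton_self _))

lemma not_prime_diag : ¬ IsPrimeEl diagSub := by
  intro h
  rcases h _ _ (allClosed _) (allClosed _) (prod_bot ▸ bot_le) with h | h
  · exact a_not_le h
  · exact b_not_le h

lemma sInf_primes_eq_top :
    sInf {p : Submodule ℂ (ℂ × ℂ) |
      IsClosed (p : Set (ℂ × ℂ)) ∧ IsPrimeEl p ∧ diagSub ≤ p} = ⊤ := by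
  refine top_le_iff.mp (le_sInf ?_)
  rintro p ⟨-, hp, hDp⟩
  have : p = ⊤ := by
    rcases hp _ _ (allClosed _) (allClosed _) (prod_bot ▸ bot_le) with h | h
    · exact diag_max p (lt_of_le_of_ne hDp
        (fun e => a_not_le (e ▸ h)))
    · exact diag_max p (lt_of_le_of_ne hDp
        (fun e => b_not_le (e ▸ h)))
  exact this ▸ le_rfl

/-- In `Max ℂ²`, the diagonal `D` is a maximal proper linear subspace but not a
prime element (witnessed by `a = ℂ·(1,0)`, `b = ℂ·(0,1)` with `a∘⊤∘b = 0 ≤ D`, `a ≰ D`,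
`b ≰ D`); consequently `D` is not a meet of prime elements and `Max ℂ²` is not spatial with
respect to irreducible representations. -/
theorem maxC2_not_spatial :
    (diagSub ≠ ⊤ ∧ ∀ M : Submodule ℂ (ℂ × ℂ), diagSub < M → M = ⊤) ∧
    (qmul (qmul (Submodule.span ℂ {((1 : ℂ), (0 : ℂ))}) ⊤)
        (Submodule.span ℂ {((0 : ℂ), (1 : ℂ))}) = ⊥ ∧
      ¬ Submodule.span ℂ {((1 : ℂ), (0 : ℂ))} ≤ diagSub ∧
      ¬ Submodule.span ℂ {((0 : ℂ), (1 : ℂ))} ≤ diagSub) ∧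
    ¬ IsPrimeEl diagSub ∧
    diagSub ≠ sInf {p : Submodule ℂ (ℂ × ℂ) |
        IsClosed (p : Set (ℂ × ℂ)) ∧ IsPrimeEl p ∧ diagSub ≤ p} ∧
    ¬ (∀ m : Submodule ℂ (ℂ × ℂ), IsClosed (m : Set (ℂ × ℂ)) →
        m = sInf {p : Submodule ℂ (ℂ × ℂ) |
          IsClosed (p : Set (ℂ × ℂ)) ∧ IsPrimeEl p ∧ m ≤ p}) := by
  have hne : diagSub ≠ sInf {p : Submodule ℂ (ℂ × ℂ) |
      IsClosed (p : Set (ℂ × ℂ)) ∧ IsPrimeEl p ∧ diagSub ≤ p} := by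
    rw [sInf_primes_eq_top]; exact diag_ne_top
  exact ⟨⟨diag_ne_top, diag_max⟩, ⟨prod_bot, a_not_le, b_not_le⟩, not_prime_diag,
    hne, fun h => hne (h diagSub (allClosed _))⟩
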